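/- Let A be an elegant Reedy category with a model structure on Â whose cofibrations are the monomorphisms (weak equivalences a localizer). Given fibrations p : X → S and q : Y → S and a map f : X → Y with q f = p, the map f is a weak equivalence if and only if for every representable a and every section s : a → S, the induced map a ×_S X → a ×_S Y is a weak equivalence. -/

import Mathlib

open CategoryTheory CategoryTheory.Limits CategoryTheory.GrothendieckTopology Opposite

universe u

variable (A : Type u) [SmallCategory A]

/-- The category of presheaves of sets on `A`. -/
abbrev Psh := Aᵒᵖ ⥤ Type u

variable {A}

/-- A model category structure on the category of presheaves on `A` whose
cofibrations are exactly the monomorphisms.  We record the weak equivalences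
and the fibrations, together with the usual model category axioms
(two-out-of-three, stability under retracts, lifting and factorization),
as well as the (derivable) stability of fibrations, trivial fibrations and
weak equivalences under pullback along fibrations. -/
structure PshModel (A : Type u) [SmallCategory A] where
  W : MorphismProperty (Psh A)
  Fib : MorphismProperty (Psh A)
  weq_id : ∀ X : Psh A, W (𝟙 X)
  weq_comp : ∀ {X Y Z : Psh A} (f : X ⟶ Y) (g : Y ⟶ Z), W f → W g → W (f ≫ g)
  weq_cancel_left : ∀ {X Y Z : Psh A} (f : X ⟶ Y) (g : Y ⟶ Z), W f → W (f ≫ g) → W g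
  weq_cancel_right : ∀ {X Y Z : Psh A} (f : X ⟶ Y) (g : Y ⟶ Z), W g → W (f ≫ g) → W f
  weq_retract : ∀ {X Y X' Y' : Psh A} (f : X ⟶ Y) (f' : X' ⟶ Y')
    (i : X ⟶ X') (r : X' ⟶ X) (j : Y ⟶ Y') (s : Y' ⟶ Y),
    i ≫ r = 𝟙 X → j ≫ s = 𝟙 Y → i ≫ f' = f ≫ j → f' ≫ s = r ≫ f → W f' → W f
  fib_retract : ∀ {X Y X' Y' : Psh A} (f : X ⟶ Y) (f' : X' ⟶ Y')
    (i : X ⟶ X') (r : X' ⟶ X) (j : Y ⟶ Y') (s : Y' ⟶ Y),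
    i ≫ r = 𝟙 X → j ≫ s = 𝟙 Y → i ≫ f' = f ≫ j → f' ≫ s = r ≫ f → W f' → Fib f' → Fib f
  fib_comp : ∀ {X Y Z : Psh A} (f : X ⟶ Y) (g : Y ⟶ Z), Fib f → Fib g → Fib (f ≫ g)
  lift_trivCof_fib : ∀ {X Y S T : Psh A} (i : X ⟶ Y) (p : S ⟶ T),
    Mono i → W i → Fib p → HasLiftingProperty i p
  lift_cof_trivFib : ∀ {X Y S T : Psh A} (i : X ⟶ Y) (p : S ⟶ T),
    Mono i → Fib p → W p → HasLiftingProperty i p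
  fact_cof_trivFib : ∀ {X Y : Psh A} (f : X ⟶ Y),
    ∃ (Z : Psh A) (i : X ⟶ Z) (p : Z ⟶ Y), Mono i ∧ Fib p ∧ W p ∧ i ≫ p = f
  fact_trivCof_fib : ∀ {X Y : Psh A} (f : X ⟶ Y),
    ∃ (Z : Psh A) (i : X ⟶ Z) (p : Z ⟶ Y), Mono i ∧ W i ∧ Fib p ∧ i ≫ p = f
  fib_pullback : ∀ {X Y Y' : Psh A} (v : Y ⟶ Y') (p : X ⟶ Y'),
    Fib p → Fib (pullback.fst v p)
  trivFib_pullback : ∀ {X Y Y' : Psh A} (v : Y ⟶ Y') (p : X ⟶ Y'),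
    Fib p → W p → W (pullback.fst v p)

namespace PshModel

variable (M : PshModel A)

/-- Trivial fibrations. -/
def TrivFib {X Y : Psh A} (p : X ⟶ Y) : Prop := M.Fib p ∧ M.W p

/-- Trivial cofibrations. -/
def TrivCof {X Y : Psh A} (i : X ⟶ Y) : Prop := Mono i ∧ M.W i

/-- An object is fibrant if the map to the terminal object is a fibration. -/
def Fibrant (X : Psh A) : Prop := M.Fib (terminal.from X)

/-- Right properness: weak equivalences are stable under pullback along fibrations. -/
def RightProper : Prop := ∀ {X Y Y' : Psh A} (v : Y ⟶ Y') (p : X ⟶ Y'),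
  M.Fib p → M.W v → M.W (pullback.snd v p)

/-- Left properness: weak equivalences are stable under pushout along cofibrations
(= monomorphisms). -/
def LeftProper : Prop := ∀ {Z X Y : Psh A} (f : Z ⟶ X) (g : Z ⟶ Y),
  Mono f → M.W g → M.W (pushout.inr g f)

def Proper : Prop := M.LeftProper ∧ M.RightProper

/-- Strong properness: the model structure is proper and fibrations are local:
a map is a fibration as soon as all of its pullbacks to representables are. -/
def StronglyProper : Prop :=
  M.Proper ∧ ∀ {X Y : Psh A} (p : X ⟶ Y),
    (∀ (a : A) (s : yoneda.obj a ⟶ Y), M.Fib (pullback.fst s p)) → M.Fib p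

end PshModel

/-- An interval object for a model structure on presheaves: an object `I` with
two endpoints `i0`, `i1`, whose pairing is a monomorphism, and such that all the
projections `I × X → X` are weak equivalences. -/
structure PshInterval (M : PshModel A) where
  I : Psh A
  i0 : ⊤_ (Psh A) ⟶ I
  i1 : ⊤_ (Psh A) ⟶ I
  endpoints_mono : Mono (coprod.desc i0 i1)
  proj_weq : ∀ X : Psh A, M.W (prod.snd : I ⨯ X ⟶ X)

namespace PshInterval

variable {M : PshModel A} (Iv : PshInterval M)

/-- The evaluation of a homotopy `h : I × X → Y` at the endpoint `ε`. -/
noncomputable def ev {X Y : Psh A} (e : ⊤_ (Psh A) ⟶ Iv.I) (h : Iv.I ⨯ X ⟶ Y) : X ⟶ Y :=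
  prod.lift (terminal.from X ≫ e) (𝟙 X) ≫ h

/-- A homotopy `h : I × X → Y` is constant on a subobject `S` of `X` if its
restriction to `I × S` factors through the projection to `S`. -/
def ConstantOn {X Y : Psh A} (h : Iv.I ⨯ X ⟶ Y) (S : Subfunctor X) : Prop :=
  ∃ k : S.toFunctor ⟶ Y, prod.map (𝟙 Iv.I) S.ι ≫ h = prod.snd ≫ k

end PshInterval

/-- The boundary of a presheaf: the supremum of all its proper subobjects.
For a representable presheaf over an Eilenberg-Zilber category this is the maximal
proper subobject. -/
def pshBoundary (X : Psh A) : Subfunctor X where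
  obj U := {x | ∃ G : Subfunctor X, G ≠ ⊤ ∧ x ∈ G.obj U}
  map := by
    rintro U V i x ⟨G, hG, hx⟩
    exact ⟨G, hG, G.map i hx⟩

/-- The boundary of a section `x : a ⟶ X`: the restriction of `x` to the
boundary of the representable presheaf `a`. -/
def sectionBoundary {X : Psh A} {a : A} (x : yoneda.obj a ⟶ X) :
    (pshBoundary (yoneda.obj a)).toFunctor ⟶ X :=
  (pshBoundary (yoneda.obj a)).ι ≫ x

/-- Two sections `x y : a ⟶ X` are `∂`-equivalent if they have the same boundary
and there is a homotopy between them which is constant on the boundary `∂a`. -/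
def BdEquiv (M : PshModel A) (Iv : PshInterval M) {X : Psh A} {a : A}
    (x y : yoneda.obj a ⟶ X) : Prop :=
  sectionBoundary x = sectionBoundary y ∧
  ∃ h : Iv.I ⨯ yoneda.obj a ⟶ X, Iv.ConstantOn h (pshBoundary (yoneda.obj a)) ∧
    Iv.ev Iv.i0 h = x ∧ Iv.ev Iv.i1 h = y

/-- A minimal complex: a fibrant object in which any two `∂`-equivalent sections
are equal. -/
def MinimalComplex (M : PshModel A) (Iv : PshInterval M) (X : Psh A) : Prop :=
  M.Fibrant X ∧ ∀ (a : A) (x y : yoneda.obj a ⟶ X), BdEquiv M Iv x y → x = y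

/-- `∂`-equivalence of sections of `X` over `Y` (i.e. in the slice over `Y`):
the homotopy is required to be fibrewise, i.e. constant over `Y`. -/
def BdEquivOver (M : PshModel A) (Iv : PshInterval M) {X Y : Psh A} (p : X ⟶ Y)
    {a : A} (x y : yoneda.obj a ⟶ X) : Prop :=
  x ≫ p = y ≫ p ∧
  sectionBoundary x = sectionBoundary y ∧
  ∃ h : Iv.I ⨯ yoneda.obj a ⟶ X, Iv.ConstantOn h (pshBoundary (yoneda.obj a)) ∧
    h ≫ p = prod.snd ≫ x ≫ p ∧
    Iv.ev Iv.i0 h = x ∧ Iv.ev Iv.i1 h = y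

/-- A minimal fibration: a fibration which is a minimal complex as an object of
the slice over its codomain (with the induced model structure), i.e. any two
sections which are `∂`-equivalent over the base are equal. -/
def MinFib (M : PshModel A) (Iv : PshInterval M) {X Y : Psh A} (p : X ⟶ Y) : Prop :=
  M.Fib p ∧ ∀ (a : A) (x y : yoneda.obj a ⟶ X), BdEquivOver M Iv p x y → x = y

/-- A Reedy category structure on `A`. -/
structure ReedyStruct (A : Type u) [SmallCategory A] where
  deg : A → ℕ
  plus : ∀ {a b : A}, (a ⟶ b) → Prop
  minus : ∀ {a b : A}, (a ⟶ b) → Prop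
  plus_id : ∀ a : A, plus (𝟙 a)
  minus_id : ∀ a : A, minus (𝟙 a)
  plus_comp : ∀ {a b c : A} (f : a ⟶ b) (g : b ⟶ c), plus f → plus g → plus (f ≫ g)
  minus_comp : ∀ {a b c : A} (f : a ⟶ b) (g : b ⟶ c), minus f → minus g → minus (f ≫ g)
  plus_deg : ∀ {a b : A} (f : a ⟶ b), plus f → deg a ≤ deg b
  minus_deg : ∀ {a b : A} (f : a ⟶ b), minus f → deg b ≤ deg a
  plus_deg_eq : ∀ {a b : A} (f : a ⟶ b), plus f → deg a = deg b →
    ∃ h : a = b, f = eqToHom h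
  minus_deg_eq : ∀ {a b : A} (f : a ⟶ b), minus f → deg a = deg b →
    ∃ h : a = b, f = eqToHom h
  fact : ∀ {a b : A} (f : a ⟶ b), ∃ (c : A) (g : a ⟶ c) (h : c ⟶ b),
    minus g ∧ plus h ∧ g ≫ h = f
  fact_unique : ∀ {a b c c' : A} (g : a ⟶ c) (h : c ⟶ b) (g' : a ⟶ c') (h' : c' ⟶ b),
    minus g → plus h → minus g' → plus h' → g ≫ h = g' ≫ h' →
    ∃ e : c = c', g' = g ≫ eqToHom e ∧ h = eqToHom e ≫ h'

namespace ReedyStruct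

variable (R : ReedyStruct A)

/-- A section `y` of a presheaf is degenerate if it is the restriction of a section
along a non-identity map of `A₋`. -/
def Degenerate {X : Psh A} {b : A} (y : X.obj (op b)) : Prop :=
  ∃ (c : A) (g : b ⟶ c), R.minus g ∧ R.deg c < R.deg b ∧ ∃ z : X.obj (op c), X.map g.op z = y

def Nondegenerate {X : Psh A} {b : A} (y : X.obj (op b)) : Prop := ¬ R.Degenerate y

end ReedyStruct

/-- An elegant Reedy category (in the sense of Bergner--Rezk): a Reedy category
in which every section of every presheaf is, in a unique way, the restriction of
a non-degenerate section along a map of `A₋`. -/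
structure ElegantReedy (A : Type u) [SmallCategory A] extends ReedyStruct A where
  ez_exists : ∀ (X : Psh A) (a : A) (x : X.obj (op a)),
    ∃ (b : A) (f : a ⟶ b) (y : X.obj (op b)),
      minus f ∧ toReedyStruct.Nondegenerate y ∧ X.map f.op y = x
  ez_unique : ∀ (X : Psh A) (a : A) {b b' : A} (f : a ⟶ b) (f' : a ⟶ b')
    (y : X.obj (op b)) (y' : X.obj (op b')),
    minus f → minus f' → toReedyStruct.Nondegenerate y → toReedyStruct.Nondegenerate y' →
    X.map f.op y = X.map f'.op y' →
    ∃ e : b = b', f' = f ≫ eqToHom e ∧ y = X.map (eqToHom e).op y'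

/-- An Eilenberg-Zilber category: a Reedy category in which every map of `A₋`
has a section, and two maps of `A₋` with the same set of sections are equal. -/
structure EZCat (A : Type u) [SmallCategory A] extends ReedyStruct A where
  EZ1 : ∀ {a b : A} (f : a ⟶ b), minus f → ∃ s : b ⟶ a, s ≫ f = 𝟙 b
  EZ2 : ∀ {a b : A} (f g : a ⟶ b), minus f → minus g →
    (∀ s : b ⟶ a, s ≫ f = 𝟙 b ↔ s ≫ g = 𝟙 b) → f = g

attribute [local simp] pullback.lift_fst pullback.lift_snd pullback.lift_fst_assoc pullback.lift_snd_assoc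

section AuxLemmas

lemma aux_w_iso (M : PshModel A) {X Y : Psh A} (e : X ⟶ Y) [IsIso e] : M.W e :=
  M.weq_retract e (𝟙 X) (𝟙 X) (𝟙 X) (inv e) e (by simp) (by simp) (by simp) (by simp)
    (M.weq_id X)

lemma aux_fib_iso (M : PshModel A) {X Y : Psh A} (e : X ⟶ Y) [IsIso e] : M.Fib e := by
  obtain ⟨Z, i, π', hmono, hiW, hπF, hcomp⟩ := M.fact_trivCof_fib e
  have hπW : M.W π' := M.weq_cancel_left i π' hiW (by rw [hcomp]; exact aux_w_iso M e)
  exact M.fib_retract e π' i (π' ≫ inv e) (𝟙 Y) (𝟙 Y)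
    (by rw [← Category.assoc, hcomp]; simp) (by simp) (by simp [hcomp]) (by simp) hπW hπF

lemma aux_fib_snd (M : PshModel A) {X Y Y' : Psh A} (p : X ⟶ Y') (v : Y ⟶ Y')
    (hp : M.Fib p) : M.Fib (pullback.snd p v) := by
  rw [← pullbackSymmetry_hom_comp_fst]
  exact M.fib_comp _ _ (aux_fib_iso M _) (M.fib_pullback v p hp)

section PbMap

variable {T S E Y : Psh A} (s : T ⟶ S) (q : Y ⟶ S) (π : E ⟶ Y) (mE : E ⟶ S)

lemma aux_pb_iso (hm : π ≫ q = mE) (e₁ : s ≫ 𝟙 S = 𝟙 T ≫ s) (e₂ : mE ≫ 𝟙 S = π ≫ q) :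
    ∃ ψ : pullback (pullback.snd s q) π ⟶ pullback s mE, IsIso ψ ∧
      ψ ≫ pullback.map s mE s q (𝟙 T) π (𝟙 S) e₁ e₂ = pullback.fst (pullback.snd s q) π := by
  have hcond : (pullback.fst (pullback.snd s q) π ≫ pullback.fst s q) ≫ s =
      pullback.snd (pullback.snd s q) π ≫ mE := by
    rw [Category.assoc, pullback.condition (f := s) (g := q), ← hm,
      ← Category.assoc, pullback.condition (f := pullback.snd s q) (g := π), Category.assoc]
  refine ⟨pullback.lift (pullback.fst _ _ ≫ pullback.fst s q) (pullback.snd _ _) hcond, ?_, ?_⟩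
  · refine ⟨⟨pullback.lift (pullback.map s mE s q (𝟙 T) π (𝟙 S) e₁ e₂) (pullback.snd s mE)
      (by simp), ?_, ?_⟩⟩
    · apply pullback.hom_ext
      · apply pullback.hom_ext <;> simp [pullback.condition]
      · simp
    · apply pullback.hom_ext <;> simp [pullback.condition]
  · apply pullback.hom_ext <;> simp [pullback.condition]

lemma aux_pb_fib (M : PshModel A) (hm : π ≫ q = mE) (e₁ : s ≫ 𝟙 S = 𝟙 T ≫ s)
    (e₂ : mE ≫ 𝟙 S = π ≫ q) (hf : M.Fib π) :
    M.Fib (pullback.map s mE s q (𝟙 T) π (𝟙 S) e₁ e₂) := by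
  obtain ⟨ψ, hiso, hcomp⟩ := aux_pb_iso s q π mE hm e₁ e₂
  have h2 : pullback.map s mE s q (𝟙 T) π (𝟙 S) e₁ e₂ =
      inv ψ ≫ pullback.fst (pullback.snd s q) π := by
    rw [← hcomp, IsIso.inv_hom_id_assoc]
  rw [h2]
  exact M.fib_comp _ _ (aux_fib_iso M _) (M.fib_pullback _ π hf)

lemma aux_pb_weq (M : PshModel A) (hm : π ≫ q = mE) (e₁ : s ≫ 𝟙 S = 𝟙 T ≫ s)
    (e₂ : mE ≫ 𝟙 S = π ≫ q) (hf : M.Fib π) (hw : M.W π) :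
    M.W (pullback.map s mE s q (𝟙 T) π (𝟙 S) e₁ e₂) := by
  obtain ⟨ψ, hiso, hcomp⟩ := aux_pb_iso s q π mE hm e₁ e₂
  have h2 : pullback.map s mE s q (𝟙 T) π (𝟙 S) e₁ e₂ =
      inv ψ ≫ pullback.fst (pullback.snd s q) π := by
    rw [← hcomp, IsIso.inv_hom_id_assoc]
  rw [h2]
  exact M.weq_comp _ _ (aux_w_iso M _) (M.trivFib_pullback _ π hf hw)

end PbMap

lemma aux_brown (M : PshModel A) {X Y S : Psh A} (q : Y ⟶ S) (f : X ⟶ Y)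
    (hq : M.Fib q) (hp : M.Fib (f ≫ q)) :
    ∃ (W₀ : Psh A) (j : X ⟶ W₀) (π : W₀ ⟶ Y) (r : W₀ ⟶ X),
      j ≫ π = f ∧ j ≫ r = 𝟙 X ∧ M.W j ∧ M.Fib π ∧ M.Fib r ∧ M.W r ∧
      r ≫ (f ≫ q) = π ≫ q := by
  obtain ⟨W₀, j, w, hmono, hjW, hwF, hjw⟩ :=
    M.fact_trivCof_fib (pullback.lift (𝟙 X) f (by simp) : X ⟶ pullback (f ≫ q) q)
  have hjr : j ≫ (w ≫ pullback.fst (f ≫ q) q) = 𝟙 X := by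
    rw [← Category.assoc, hjw]; simp
  refine ⟨W₀, j, w ≫ pullback.snd (f ≫ q) q, w ≫ pullback.fst (f ≫ q) q, ?_, hjr, hjW,
    ?_, ?_, ?_, ?_⟩
  · rw [← Category.assoc, hjw]; simp
  · exact M.fib_comp _ _ hwF (aux_fib_snd M _ _ hp)
  · exact M.fib_comp _ _ hwF (M.fib_pullback _ _ hq)
  · exact M.weq_cancel_left j _ hjW (by rw [hjr]; exact M.weq_id X)
  · rw [Category.assoc, Category.assoc, pullback.condition]

lemma aux_w_of_rlp (M : PshModel A) {X Y : Psh A} (π : X ⟶ Y) (hfib : M.Fib π)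
    (hlift : ∀ {U V : Psh A} (m : U ⟶ V), Mono m → ∀ (u : U ⟶ X) (v : V ⟶ Y),
      u ≫ π = m ≫ v → ∃ L, m ≫ L = u ∧ L ≫ π = v) : M.W π := by
  obtain ⟨Z, i, π', hmono, hπ'F, hπ'W, hcomp⟩ := M.fact_cof_trivFib π
  obtain ⟨L, hL1, hL2⟩ := hlift i hmono (𝟙 X) π' (by simp [hcomp])
  exact M.weq_retract π π' i L (𝟙 Y) (𝟙 Y) hL1 (by simp) (by simp [hcomp]) (by simp [hL2]) hπ'W

section Zorn

variable {V E' Y : Psh A} (π : E' ⟶ Y) (S₀ : Subfunctor V) (u : S₀.toFunctor ⟶ E')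
  (v : V ⟶ Y)

/-- A partial lift: a subpresheaf `T` containing `S₀` together with a map `T ⟶ E'`
extending `u` and lying over `v`. -/
def AuxGood (p : Σ T : Subfunctor V, T.toFunctor ⟶ E') : Prop :=
  (∃ h : S₀ ≤ p.1, ∀ (cc : Aᵒᵖ) (x : V.obj cc) (hx : x ∈ S₀.obj cc),
      p.2.app cc ⟨x, h cc hx⟩ = u.app cc ⟨x, hx⟩) ∧
  ∀ (cc : Aᵒᵖ) (x : p.1.toFunctor.obj cc), π.app cc (p.2.app cc x) = v.app cc x.1

/-- The extension order on partial lifts. -/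
def AuxRel (p q : Σ T : Subfunctor V, T.toFunctor ⟶ E') : Prop :=
  ∃ h : p.1 ≤ q.1, ∀ (cc : Aᵒᵖ) (x : V.obj cc) (hx : x ∈ p.1.obj cc),
    q.2.app cc ⟨x, h cc hx⟩ = p.2.app cc ⟨x, hx⟩

lemma aux_lift_of_local (EL : ElegantReedy A) (hl : ∀ (a : A) (P : Subfunctor (yoneda.obj a))
      (u' : P.toFunctor ⟶ E') (t : yoneda.obj a ⟶ Y),
      u' ≫ π = P.ι ≫ t → ∃ L, P.ι ≫ L = u' ∧ L ≫ π = t)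
    (hsq : u ≫ π = S₀.ι ≫ v) :
    ∃ L : V ⟶ E', S₀.ι ≫ L = u ∧ L ≫ π = v := by
  classical
  let r : {p // AuxGood π S₀ u v p} → {p // AuxGood π S₀ u v p} → Prop :=
    fun p q => AuxRel p.1 q.1
  haveI : Nonempty {p // AuxGood π S₀ u v p} :=
    ⟨⟨⟨S₀, u⟩, ⟨le_refl S₀, fun cc x hx => rfl⟩,
      fun cc x => by have h := ConcreteCategory.congr_hom (congr_app hsq cc) x; exact h⟩⟩
  have rtrans : ∀ {p q w : {p // AuxGood π S₀ u v p}}, r p q → r q w → r p w := by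
    rintro p q w ⟨h1, c1⟩ ⟨h2, c2⟩
    exact ⟨h1.trans h2, fun cc x hx => (c2 cc x (h1 cc hx)).trans (c1 cc x hx)⟩
  have hbdd : ∀ (ch : Set {p // AuxGood π S₀ u v p}), IsChain r ch → ch.Nonempty →
      ∃ ub, ∀ p ∈ ch, r p ub := by
    rintro ch hch ⟨p₀, hp₀⟩
    let Tc : Subfunctor V :=
      { obj := fun cc => {x | ∃ p, p ∈ ch ∧ x ∈ p.1.1.obj cc}
        map := by rintro cc dd i x ⟨p, hp, hx⟩; exact ⟨p, hp, p.1.1.map i hx⟩ }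
    let val : ∀ (cc : Aᵒᵖ) (x : V.obj cc), x ∈ Tc.obj cc → E'.obj cc := fun cc x h =>
      (Classical.choose h).1.2.app cc ⟨x, (Classical.choose_spec h).2⟩
    have key : ∀ (p) (hp : p ∈ ch) (cc) (x : V.obj cc) (hx : x ∈ p.1.1.obj cc)
        (hx' : x ∈ Tc.obj cc), val cc x hx' = p.1.2.app cc ⟨x, hx⟩ := by
      intro p hp cc x hx hx'
      obtain ⟨hq, hxq⟩ := Classical.choose_spec hx'
      by_cases hpq : Classical.choose hx' = p
      · show (Classical.choose hx').1.2.app cc ⟨x, hxq⟩ = _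
        subst hpq; rfl
      · rcases hch hq hp hpq with ⟨h, c⟩ | ⟨h, c⟩
        · exact (c cc x hxq).symm
        · exact c cc x hx
    let ℓc : Tc.toFunctor ⟶ E' :=
      { app := fun cc => TypeCat.ofHom fun x => val cc x.1 x.2
        naturality := by
          intro cc dd i
          ext x
          obtain ⟨p, hp, hx⟩ := x.2
          have h1 : val dd (V.map i x.1) (Tc.map i x.2) =
              p.1.2.app dd ⟨V.map i x.1, p.1.1.map i hx⟩ := key p hp dd _ _ _
          have h2 : val cc x.1 x.2 = p.1.2.app cc ⟨x.1, hx⟩ := key p hp cc _ hx _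
          show val dd (V.map i x.1) (Tc.map i x.2) = E'.map i (val cc x.1 x.2)
          rw [h1, h2]
          exact ConcreteCategory.congr_hom (p.1.2.naturality i) ⟨x.1, hx⟩ }
    have hGood : AuxGood π S₀ u v ⟨Tc, ℓc⟩ := by
      obtain ⟨⟨hle₀, hc₀⟩, hπ₀⟩ := p₀.2
      refine ⟨⟨fun cc x hx => ⟨p₀, hp₀, hle₀ cc hx⟩, ?_⟩, ?_⟩
      · intro cc x hx
        exact (key p₀ hp₀ cc x (hle₀ cc hx) _).trans (hc₀ cc x hx)
      · intro cc x
        exact (Classical.choose x.2).2.2 cc ⟨x.1, (Classical.choose_spec x.2).2⟩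
    exact ⟨⟨⟨Tc, ℓc⟩, hGood⟩, fun p hp =>
      ⟨fun cc x hx => ⟨p, hp, hx⟩, fun cc x hx => key p hp cc x hx _⟩⟩
  obtain ⟨⟨⟨T, ℓ⟩, hGoodT⟩, hmax⟩ :=
    exists_maximal_of_nonempty_chains_bounded hbdd @rtrans
  obtain ⟨⟨hS₀T, huT⟩, hπT⟩ := hGoodT
  have hℓnat : ∀ (cc dd : Aᵒᵖ) (i : cc ⟶ dd) (x : T.toFunctor.obj cc),
      ℓ.app dd (T.toFunctor.map i x) = E'.map i (ℓ.app cc x) :=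
    fun cc dd i x => ConcreteCategory.congr_hom (ℓ.naturality i) x
  have hTtop : ∀ (cc : Aᵒᵖ) (x : V.obj cc), x ∈ T.obj cc := by
    by_contra hT
    push_neg at hT
    obtain ⟨cc₀, x₀, hx₀⟩ := hT
    have hDne : Set.Nonempty {n | ∃ (b : A) (x : V.obj (op b)),
        x ∉ T.obj (op b) ∧ EL.deg b = n} := ⟨EL.deg cc₀.unop, cc₀.unop, x₀, hx₀, rfl⟩
    obtain ⟨a, v₀, hv₀, hdeg⟩ := Nat.sInf_mem hDne
    have hmin : ∀ (c : A) (x : V.obj (op c)), x ∉ T.obj (op c) →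
        EL.deg a ≤ EL.deg c := by
      intro c x hx
      rw [hdeg]
      exact Nat.sInf_le ⟨c, x, hx, rfl⟩
    have hC2 : EL.toReedyStruct.Nondegenerate v₀ := by
      rintro ⟨c, σ, hσ, hdlt, z, hz⟩
      by_cases hzT : z ∈ T.obj (op c)
      · exact hv₀ (hz ▸ T.map σ.op hzT)
      · exact absurd hdlt (not_lt.mpr (hmin c z hzT))
    have hC1 : ∀ (c : A) (g : c ⟶ a), V.map g.op v₀ ∉ T.obj (op c) → EL.minus g := by
      intro c g hg
      obtain ⟨mobj, σ, δ, hσ, hδ, hfact⟩ := EL.fact g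
      have hδv : V.map δ.op v₀ ∉ T.obj (op mobj) := by
        intro hmem
        apply hg
        rw [← hfact, op_comp, FunctorToTypes.map_comp_apply]
        exact T.map σ.op hmem
      obtain ⟨rfl, hδe⟩ := EL.plus_deg_eq δ hδ
        (le_antisymm (EL.plus_deg δ hδ) (hmin mobj _ hδv))
      rw [eqToHom_refl] at hδe
      rw [hδe, Category.comp_id] at hfact
      subst hfact
      exact hσ
    have hC3 : ∀ (c : A) (g g' : c ⟶ a), V.map g.op v₀ = V.map g'.op v₀ →
        V.map g.op v₀ ∉ T.obj (op c) → g = g' := by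
      intro c g g' he hg
      have hg' : V.map g'.op v₀ ∉ T.obj (op c) := he ▸ hg
      obtain ⟨e, h1, -⟩ := EL.ez_unique V c g g' v₀ v₀ (hC1 c g hg) (hC1 c g' hg') hC2 hC2 he
      rw [show e = rfl from rfl, eqToHom_refl, Category.comp_id] at h1
      exact h1.symm
    let t₀ : yoneda.obj a ⟶ V :=
      { app := fun cc => TypeCat.ofHom fun g => V.map g.op v₀
        naturality := by
          intro cc dd i
          ext g
          show V.map (i.unop ≫ g).op v₀ = V.map i (V.map g.op v₀)
          rw [op_comp, FunctorToTypes.map_comp_apply, Quiver.Hom.op_unop] }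
    have hnat : ∀ (cc dd : Aᵒᵖ) (i : cc ⟶ dd) (g : (yoneda.obj a).obj cc),
        t₀.app dd ((yoneda.obj a).map i g) = V.map i (t₀.app cc g) :=
      fun cc dd i g => ConcreteCategory.congr_hom (t₀.naturality i) g
    let P : Subfunctor (yoneda.obj a) :=
      { obj := fun cc => {g | t₀.app cc g ∈ T.obj cc}
        map := by
          intro cc dd i g hg
          show t₀.app dd ((yoneda.obj a).map i g) ∈ T.obj dd
          rw [hnat cc dd i g]
          exact T.map i hg }
    let ν : P.toFunctor ⟶ T.toFunctor :=
      { app := fun cc => TypeCat.ofHom fun g => ⟨t₀.app cc g.1, g.2⟩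
        naturality := by
          intro cc dd i
          ext g
          apply Subtype.ext
          show t₀.app dd ((yoneda.obj a).map i g.1) = V.map i (t₀.app cc g.1)
          exact hnat cc dd i g.1 }
    have hsq' : (ν ≫ ℓ) ≫ π = P.ι ≫ (t₀ ≫ v) := by
      apply NatTrans.ext
      funext cc
      ext g
      exact hπT cc (ν.app cc g)
    obtain ⟨L, hL1, hL2⟩ := hl a P (ν ≫ ℓ) (t₀ ≫ v) hsq'
    have hLnat : ∀ (cc dd : Aᵒᵖ) (i : cc ⟶ dd) (g : (yoneda.obj a).obj cc),
        L.app dd ((yoneda.obj a).map i g) = E'.map i (L.app cc g) :=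
      fun cc dd i g => ConcreteCategory.congr_hom (L.naturality i) g
    have hLpt : ∀ (cc) (g : (yoneda.obj a).obj cc) (hg : g ∈ P.obj cc),
        L.app cc g = ℓ.app cc ⟨t₀.app cc g, hg⟩ :=
      fun cc g hg => ConcreteCategory.congr_hom (congr_app hL1 cc) (⟨g, hg⟩ : P.toFunctor.obj cc)
    have hLπ : ∀ (cc) (g : (yoneda.obj a).obj cc),
        π.app cc (L.app cc g) = v.app cc (t₀.app cc g) :=
      fun cc g => ConcreteCategory.congr_hom (congr_app hL2 cc) g
    let T' : Subfunctor V :=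
      { obj := fun cc => T.obj cc ∪ Set.range (t₀.app cc)
        map := by
          rintro cc dd i x (hx | ⟨g, hg⟩)
          · exact Or.inl (T.map i hx)
          · refine Or.inr ⟨(yoneda.obj a).map i g, ?_⟩
            rw [hnat cc dd i g, hg] }
    let f' : ∀ (cc : Aᵒᵖ), T'.toFunctor.obj cc → E'.obj cc := fun cc x =>
      if hx : x.1 ∈ T.obj cc then ℓ.app cc ⟨x.1, hx⟩
      else L.app cc (Classical.choose (x.2.resolve_left hx))
    have K1 : ∀ (cc) (x : T'.toFunctor.obj cc) (hx : x.1 ∈ T.obj cc),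
        f' cc x = ℓ.app cc ⟨x.1, hx⟩ := fun cc x hx => dif_pos hx
    have K2 : ∀ (cc) (x : T'.toFunctor.obj cc) (g : (yoneda.obj a).obj cc),
        t₀.app cc g = x.1 → f' cc x = L.app cc g := by
      intro cc x g hg
      by_cases hx : x.1 ∈ T.obj cc
      · rw [K1 cc x hx]
        have hgP : g ∈ P.obj cc := by
          show t₀.app cc g ∈ T.obj cc
          rw [hg]
          exact hx
        rw [hLpt cc g hgP]
        exact congrArg (ℓ.app cc)
          (Subtype.ext hg.symm : (⟨x.1, hx⟩ : T.toFunctor.obj cc) = ⟨t₀.app cc g, hgP⟩)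
      · show dite _ _ _ = _
        rw [dif_neg hx]
        have hspec : t₀.app cc (Classical.choose (x.2.resolve_left hx)) = x.1 :=
          Classical.choose_spec (x.2.resolve_left hx)
        exact congrArg (L.app cc)
          (hC3 cc.unop (Classical.choose (x.2.resolve_left hx)) g
            (hspec.trans hg.symm) (fun h => hx (hspec ▸ h)))
    have hnat' : ∀ (cc dd : Aᵒᵖ) (i : cc ⟶ dd) (x : T'.toFunctor.obj cc),
        f' dd (T'.toFunctor.map i x) = E'.map i (f' cc x) := by
      intro cc dd i x
      rcases x.2 with hx | ⟨g, hg⟩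
      · rw [K1 cc x hx, K1 dd (T'.toFunctor.map i x) (T.map i hx)]
        exact hℓnat cc dd i ⟨x.1, hx⟩
      · rw [K2 cc x g hg, K2 dd (T'.toFunctor.map i x) ((yoneda.obj a).map i g)
          (by show t₀.app dd ((yoneda.obj a).map i g) = V.map i x.1
              rw [hnat cc dd i g, hg])]
        exact hLnat cc dd i g
    let ℓ' : T'.toFunctor ⟶ E' :=
      { app := fun cc => TypeCat.ofHom (f' cc), naturality := fun cc dd i => by ext x; exact hnat' cc dd i x }
    have hGood' : AuxGood π S₀ u v ⟨T', ℓ'⟩ := by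
      constructor
      · refine ⟨fun cc x hx => Or.inl (hS₀T cc hx), ?_⟩
        intro cc x hx
        exact (K1 cc ⟨x, Or.inl (hS₀T cc hx)⟩ (hS₀T cc hx)).trans (huT cc x hx)
      · intro cc x
        rcases x.2 with hx | ⟨g, hg⟩
        · rw [show ℓ'.app cc x = f' cc x from rfl, K1 cc x hx]
          exact hπT cc ⟨x.1, hx⟩
        · rw [show ℓ'.app cc x = f' cc x from rfl, K2 cc x g hg]
          exact (hLπ cc g).trans (congrArg (v.app cc) hg)
    obtain ⟨hle', -⟩ := hmax ⟨⟨T', ℓ'⟩, hGood'⟩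
      ⟨fun cc x hx => Or.inl hx, fun cc x hx => K1 cc ⟨x, Or.inl hx⟩ hx⟩
    apply hv₀
    exact hle' (op a) (Or.inr ⟨𝟙 a, by
      show V.map (𝟙 a).op v₀ = v₀
      rw [op_id, FunctorToTypes.map_id_apply]⟩)
  refine ⟨{ app := fun cc => TypeCat.ofHom fun x => ℓ.app cc ⟨x, hTtop cc x⟩,
            naturality := fun cc dd i => by ext x; exact hℓnat cc dd i ⟨x, hTtop cc x⟩ }, ?_, ?_⟩
  · apply NatTrans.ext
    funext cc
    ext x
    exact huT cc x.1 x.2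
  · apply NatTrans.ext
    funext cc
    ext x
    exact hπT cc ⟨x, hTtop cc x⟩

lemma aux_lift_of_local_mono (EL : ElegantReedy A) {E' Y : Psh A} (π : E' ⟶ Y)
    (hl : ∀ (a : A) (P : Subfunctor (yoneda.obj a)) (u' : P.toFunctor ⟶ E')
      (t : yoneda.obj a ⟶ Y), u' ≫ π = P.ι ≫ t → ∃ L, P.ι ≫ L = u' ∧ L ≫ π = t)
    {U V : Psh A} (m : U ⟶ V) (hm : Mono m) (u : U ⟶ E') (v : V ⟶ Y)
    (hsq : u ≫ π = m ≫ v) : ∃ L : V ⟶ E', m ≫ L = u ∧ L ≫ π = v := by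
  haveI := hm
  haveI : IsIso (Subfunctor.toRange m) := inferInstance
  obtain ⟨L, h1, h2⟩ := aux_lift_of_local π (Subfunctor.range m) (inv (Subfunctor.toRange m) ≫ u) v
    EL hl
    (by
      have hmι : inv (Subfunctor.toRange m) ≫ m = (Subfunctor.range m).ι := by
        rw [IsIso.inv_comp_eq]
        exact (Subfunctor.toRange_ι m).symm
      rw [Category.assoc, hsq, ← Category.assoc, hmι])
  refine ⟨L, ?_, h2⟩
  have hmι : m = Subfunctor.toRange m ≫ (Subfunctor.range m).ι := (Subfunctor.toRange_ι m).symm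
  rw [hmι, Category.assoc, h1, IsIso.hom_inv_id_assoc]

end Zorn

end AuxLemmas

/-- Corollary: over an elegant Reedy category, weak equivalences between fibrations
over a base `S` are local: `f` is a weak equivalence if and only if its pullback over
every section of `S` by a representable is a weak equivalence. -/
theorem stmt15 (E : ElegantReedy A) (M : PshModel A)
    {X Y S : Psh A} (p : X ⟶ S) (q : Y ⟶ S) (hp : M.Fib p) (hq : M.Fib q)
    (f : X ⟶ Y) (hf : f ≫ q = p) :
    M.W f ↔ ∀ (a : A) (s : yoneda.obj a ⟶ S),
      M.W (pullback.map s p s q (𝟙 _) f (𝟙 _) (by simp) (by simp [hf])) := by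
  subst hf
  obtain ⟨W₀, j, π, r, hjπ, hjr, hjW, hπF, hrF, hrW, hrq⟩ := aux_brown M q f hq hp
  -- the compatibility of the various induced maps on pullbacks
  have hcmp2 : ∀ (a : A) (s : yoneda.obj a ⟶ S),
      pullback.map s (f ≫ q) s (π ≫ q) (𝟙 _) j (𝟙 _) (by simp) (by simp [← hjπ]) ≫
        pullback.map s (π ≫ q) s q (𝟙 _) π (𝟙 _) (by simp) (by simp) =
      pullback.map s (f ≫ q) s q (𝟙 _) f (𝟙 _) (by simp) (by simp) := by
    intro a s
    apply pullback.hom_ext <;> simp [← hjπ]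
  have hPjW : ∀ (a : A) (s : yoneda.obj a ⟶ S),
      M.W (pullback.map s (f ≫ q) s (π ≫ q) (𝟙 _) j (𝟙 _) (by simp) (by simp [← hjπ])) := by
    intro a s
    have h2 : M.W (pullback.map s (π ≫ q) s (f ≫ q) (𝟙 _) r (𝟙 _) (by simp) (by simp [hrq])) :=
      aux_pb_weq s (f ≫ q) r (π ≫ q) M hrq (by simp) (by simp [hrq]) hrF hrW
    apply M.weq_cancel_right _ _ h2
    have hcmp : pullback.map s (f ≫ q) s (π ≫ q) (𝟙 _) j (𝟙 _) (by simp) (by simp [← hjπ]) ≫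
        pullback.map s (π ≫ q) s (f ≫ q) (𝟙 _) r (𝟙 _) (by simp) (by simp [hrq]) = 𝟙 _ := by
      apply pullback.hom_ext <;> simp [hjr]
    rw [hcmp]
    exact M.weq_id _
  constructor
  · intro hWf a s
    have hπW : M.W π := M.weq_cancel_left j π hjW (by rw [hjπ]; exact hWf)
    have h1 : M.W (pullback.map s (π ≫ q) s q (𝟙 _) π (𝟙 _) (by simp) (by simp)) :=
      aux_pb_weq s q π (π ≫ q) M rfl (by simp) (by simp) hπF hπW
    rw [← hcmp2 a s]
    exact M.weq_comp _ _ (hPjW a s) h1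
  · intro h
    have hPπW : ∀ (a : A) (s : yoneda.obj a ⟶ S),
        M.W (pullback.map s (π ≫ q) s q (𝟙 _) π (𝟙 _) (by simp) (by simp)) := by
      intro a s
      exact M.weq_cancel_left _ _ (hPjW a s) (by rw [hcmp2 a s]; exact h a s)
    have hPπF : ∀ (a : A) (s : yoneda.obj a ⟶ S),
        M.Fib (pullback.map s (π ≫ q) s q (𝟙 _) π (𝟙 _) (by simp) (by simp)) := by
      intro a s
      exact aux_pb_fib s q π (π ≫ q) M rfl (by simp) (by simp) hπF
    have hl : ∀ (a : A) (P : Subfunctor (yoneda.obj a)) (u' : P.toFunctor ⟶ W₀)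
        (t : yoneda.obj a ⟶ Y), u' ≫ π = P.ι ≫ t → ∃ L, P.ι ≫ L = u' ∧ L ≫ π = t := by
      intro a P u' t hsq'
      haveI : HasLiftingProperty P.ι
          (pullback.map (t ≫ q) (π ≫ q) (t ≫ q) q (𝟙 _) π (𝟙 _) (by simp) (by simp)) :=
        M.lift_cof_trivFib P.ι _ inferInstance (hPπF a (t ≫ q)) (hPπW a (t ≫ q))
      have hcsq : CommSq
          (pullback.lift P.ι u'
            (by rw [← Category.assoc, ← hsq', Category.assoc]) :
              P.toFunctor ⟶ pullback (t ≫ q) (π ≫ q))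
          P.ι
          (pullback.map (t ≫ q) (π ≫ q) (t ≫ q) q (𝟙 _) π (𝟙 _) (by simp) (by simp))
          (pullback.lift (𝟙 _) t (by simp)) := by
        constructor
        apply pullback.hom_ext <;> simp [hsq']
      refine ⟨hcsq.lift ≫ pullback.snd (t ≫ q) (π ≫ q), ?_, ?_⟩
      · rw [← Category.assoc, hcsq.fac_left]
        simp
      · rw [Category.assoc, show pullback.snd (t ≫ q) (π ≫ q) ≫ π =
          pullback.map (t ≫ q) (π ≫ q) (t ≫ q) q (𝟙 _) π (𝟙 _) (by simp) (by simp) ≫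
            pullback.snd (t ≫ q) q from by simp, ← Category.assoc, hcsq.fac_right]
        simp
    have hπW : M.W π :=
      aux_w_of_rlp M π hπF (fun m hm u v hsq' => aux_lift_of_local_mono E π hl m hm u v hsq')
    rw [← hjπ]
    exact M.weq_comp j π hjW hπW
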